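/- Let X = Y ⊔ Z, suppose the free monoid Y* carries a monomial order (a linear order such that u < v implies w₁ u w₂ < w₁ v w₂ for all w₁, w₂ ∈ Y*) and Z carries a linear order. Then the inverse tower order on X* — defined by writing each word uniquely as u = u_0 z_1 u_1 ⋯ z_k u_k with k ≥ 0, u_i ∈ Y*, z_i ∈ Z, assigning the inverse weight inwt(u) = (k, u_k, z_k, u_{k-1}, z_{k-1}, …, u_1, z_1, u_0), and setting u > v iff inwt(u) > inwt(v) lexicographically — is a monomial order on the free monoid X*: it is a linear order, and u > v implies w₁ u w₂ > w₁ v w₂ for all w₁, w₂ ∈ X*. -/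

import Mathlib

variable {Y Z : Type*}

/-- Factor a word over `Y ⊕ Z` as `u₀ z₁ u₁ ⋯ z_k u_k` with `uᵢ ∈ Y*` and `zᵢ ∈ Z`:
the result is the pair `(u₀, [(z₁, u₁), …, (z_k, u_k)])`. -/
def towerDecomp : List (Y ⊕ Z) → FreeMonoid Y × List (Z × FreeMonoid Y)
  | [] => (1, [])
  | Sum.inl y :: rest =>
      (FreeMonoid.of y * (towerDecomp rest).1, (towerDecomp rest).2)
  | Sum.inr z :: rest =>
      (1, (z, (towerDecomp rest).1) :: (towerDecomp rest).2)

/-- Comparison of the blocks `(zᵢ, uᵢ)` occurring in the inverse weight: first by the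
`Y*`-component `uᵢ`, then by the `Z`-letter `zᵢ`. -/
def towerPairLt [LT (FreeMonoid Y)] [LT Z] (p q : Z × FreeMonoid Y) : Prop :=
  p.2 < q.2 ∨ (p.2 = q.2 ∧ p.1 < q.1)

/-- The inverse tower order on `(Y ⊕ Z)*`: writing `u = u₀ z₁ u₁ ⋯ z_k u_k`, words are
compared by their inverse weights `inwt u = (k, u_k, z_k, u_{k-1}, z_{k-1}, …, u₁, z₁, u₀)`
lexicographically. -/
def towerLt [LT (FreeMonoid Y)] [LT Z] (u v : FreeMonoid (Y ⊕ Z)) : Prop :=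
  (towerDecomp u.toList).2.length < (towerDecomp v.toList).2.length ∨
    ((towerDecomp u.toList).2.length = (towerDecomp v.toList).2.length ∧
      (List.Lex towerPairLt (towerDecomp u.toList).2.reverse (towerDecomp v.toList).2.reverse ∨
        ((towerDecomp u.toList).2 = (towerDecomp v.toList).2 ∧
          (towerDecomp u.toList).1 < (towerDecomp v.toList).1)))

/-! ### Auxiliary definitions and lemmas -/

/-- Multiply the `Y*`-component of the last block of a block list by `c`. -/
def modLastTD (c : FreeMonoid Y) : List (Z × FreeMonoid Y) → List (Z × FreeMonoid Y)
  | [] => []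
  | [p] => [(p.1, p.2 * c)]
  | p :: q :: t => p :: modLastTD c (q :: t)

@[simp] lemma modLastTD_nil (c : FreeMonoid Y) : modLastTD (Z := Z) c [] = [] := rfl

lemma modLastTD_singleton (c : FreeMonoid Y) (z : Z) (u : FreeMonoid Y) :
    modLastTD c [(z, u)] = [(z, u * c)] := rfl

@[simp] lemma modLastTD_length (c : FreeMonoid Y) :
    ∀ L : List (Z × FreeMonoid Y), (modLastTD c L).length = L.length
  | [] => rfl
  | [_] => rfl
  | p :: q :: t => by
      show (p :: modLastTD c (q :: t)).length = _
      simp [modLastTD_length c (q :: t)]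

lemma modLastTD_append (c : FreeMonoid Y) :
    ∀ (P : List (Z × FreeMonoid Y)) {Q : List (Z × FreeMonoid Y)}, Q ≠ [] →
      modLastTD c (P ++ Q) = P ++ modLastTD c Q
  | [], _, _ => rfl
  | [p], [], h => absurd rfl h
  | [p], q :: t, _ => rfl
  | p :: p' :: P, Q, hQ => by
      show p :: modLastTD c ((p' :: P) ++ Q) = _
      rw [modLastTD_append c (p' :: P) hQ]
      rfl

lemma modLastTD_of_reverse_cons (c : FreeMonoid Y) {L : List (Z × FreeMonoid Y)}
    {z : Z} {u : FreeMonoid Y} {T : List (Z × FreeMonoid Y)}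
    (h : L.reverse = (z, u) :: T) :
    (modLastTD c L).reverse = (z, u * c) :: T := by
  have hL : L = T.reverse ++ [(z, u)] := by
    have := congrArg List.reverse h
    simpa using this
  rw [hL, modLastTD_append c _ (by simp), modLastTD_singleton]
  simp

lemma towerDecomp_append : ∀ (a b : List (Y ⊕ Z)),
    ((towerDecomp (a ++ b)).2 =
      modLastTD (towerDecomp b).1 (towerDecomp a).2 ++ (towerDecomp b).2) ∧
    ((towerDecomp a).2 = [] →
      (towerDecomp (a ++ b)).1 = (towerDecomp a).1 * (towerDecomp b).1) ∧
    ((towerDecomp a).2 ≠ [] → (towerDecomp (a ++ b)).1 = (towerDecomp a).1)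
  | [], b => by
      refine ⟨rfl, fun _ => (one_mul _).symm, fun h => absurd rfl h⟩
  | Sum.inl y :: rest, b => by
      obtain ⟨ih1, ih2, ih3⟩ := towerDecomp_append rest b
      simp only [towerDecomp, List.cons_append, List.append_eq]
      exact ⟨ih1, fun h => by rw [ih2 h, mul_assoc], fun h => by rw [ih3 h]⟩
  | Sum.inr z :: rest, b => by
      obtain ⟨ih1, ih2, ih3⟩ := towerDecomp_append rest b
      simp only [towerDecomp, List.cons_append, List.append_eq]
      refine ⟨?_, fun h => by simp at h, fun _ => trivial⟩
      rcases hr : (towerDecomp rest).2 with _ | ⟨q, t⟩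
      · rw [ih1, ih2 hr, hr, modLastTD_singleton]
        rfl
      · rw [ih1, ih3 (by rw [hr]; simp), hr]
        rfl

lemma towerDecomp_append_snd (a b : List (Y ⊕ Z)) :
    (towerDecomp (a ++ b)).2 =
      modLastTD (towerDecomp b).1 (towerDecomp a).2 ++ (towerDecomp b).2 :=
  (towerDecomp_append a b).1

lemma towerDecomp_append_fst_nil (a b : List (Y ⊕ Z)) (h : (towerDecomp a).2 = []) :
    (towerDecomp (a ++ b)).1 = (towerDecomp a).1 * (towerDecomp b).1 :=
  (towerDecomp_append a b).2.1 h

lemma towerDecomp_append_fst_ne (a b : List (Y ⊕ Z)) (h : (towerDecomp a).2 ≠ []) :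
    (towerDecomp (a ++ b)).1 = (towerDecomp a).1 :=
  (towerDecomp_append a b).2.2 h

/-- Reconstruct the word from the block list. -/
def towerRecon2 : List (Z × FreeMonoid Y) → List (Y ⊕ Z)
  | [] => []
  | (z, u) :: t => Sum.inr z :: (u.toList.map Sum.inl ++ towerRecon2 t)

lemma towerRecon_eq : ∀ l : List (Y ⊕ Z),
    ((towerDecomp l).1.toList.map Sum.inl) ++ towerRecon2 (towerDecomp l).2 = l
  | [] => rfl
  | Sum.inl y :: rest => by
      show ((FreeMonoid.of y * (towerDecomp rest).1).toList.map Sum.inl) ++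
        towerRecon2 (towerDecomp rest).2 = _
      rw [FreeMonoid.toList_mul]
      simpa using towerRecon_eq rest
  | Sum.inr z :: rest => by
      show ((1 : FreeMonoid Y).toList.map Sum.inl) ++
        towerRecon2 ((z, (towerDecomp rest).1) :: (towerDecomp rest).2) = _
      simp [towerRecon2, towerRecon_eq rest]

lemma towerDecomp_injective : Function.Injective (towerDecomp (Y := Y) (Z := Z)) :=
  fun l₁ l₂ h => by rw [← towerRecon_eq l₁, ← towerRecon_eq l₂, h]

instance towerPairLt_sto [LinearOrder (FreeMonoid Y)] [LinearOrder Z] :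
    IsStrictTotalOrder (Z × FreeMonoid Y) towerPairLt where
  irrefl p h := by rcases h with h | ⟨_, h⟩ <;> exact lt_irrefl _ h
  trans p q r hpq hqr := by
    rcases hpq with h1 | ⟨e1, h1⟩ <;> rcases hqr with h2 | ⟨e2, h2⟩
    · exact Or.inl (h1.trans h2)
    · exact Or.inl (e2 ▸ h1)
    · exact Or.inl (e1 ▸ h2)
    · exact Or.inr ⟨e1.trans e2, h1.trans h2⟩
  trichotomous p q := by
    suffices H : towerPairLt p q ∨ p = q ∨ towerPairLt q p by tauto
    rcases lt_trichotomy p.2 q.2 with h | h | h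
    · exact Or.inl (Or.inl h)
    · rcases lt_trichotomy p.1 q.1 with h1 | h1 | h1
      · exact Or.inl (Or.inr ⟨h, h1⟩)
      · exact Or.inr (Or.inl (Prod.ext h1 h))
      · exact Or.inr (Or.inr (Or.inr ⟨h.symm, h1⟩))
    · exact Or.inr (Or.inr (Or.inl h))

lemma lex_append_of_length_eq {α : Type*} {r : α → α → Prop} (s t : List α) :
    ∀ {x y : List α}, List.Lex r x y → x.length = y.length →
      List.Lex r (x ++ s) (y ++ t)
  | _, _, List.Lex.nil, h => by simp at h
  | _, _, List.Lex.rel hr, _ => List.Lex.rel hr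
  | _, _, List.Lex.cons hl, h =>
      List.Lex.cons (lex_append_of_length_eq s t hl (by simpa using h))

/-- First component of the decomposition of a concatenation `a ++ lu ++ b`. -/
def compFst (a0 : FreeMonoid Y) (A : List (Z × FreeMonoid Y)) (u0 b0 : FreeMonoid Y)
    (LU : List (Z × FreeMonoid Y)) : FreeMonoid Y :=
  match A, LU with
  | [], [] => a0 * u0 * b0
  | [], _ :: _ => a0 * u0
  | _ :: _, _ => a0

lemma towerDecomp_comp (a lu b : List (Y ⊕ Z)) :
    towerDecomp ((a ++ lu) ++ b) =
      (compFst (towerDecomp a).1 (towerDecomp a).2 (towerDecomp lu).1 (towerDecomp b).1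
          (towerDecomp lu).2,
        modLastTD (towerDecomp b).1
            (modLastTD (towerDecomp lu).1 (towerDecomp a).2 ++ (towerDecomp lu).2)
          ++ (towerDecomp b).2) := by
  refine Prod.ext ?_ ?_
  · rcases hA : (towerDecomp a).2 with _ | ⟨pa, ta⟩
    · rcases hLU : (towerDecomp lu).2 with _ | ⟨pu, tu⟩
      · rw [towerDecomp_append_fst_nil _ b
            (by rw [towerDecomp_append_snd, hA, hLU]; rfl),
          towerDecomp_append_fst_nil a lu hA]
        rfl
      · rw [towerDecomp_append_fst_ne _ b
            (by rw [towerDecomp_append_snd, hA, hLU]; simp),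
          towerDecomp_append_fst_nil a lu hA]
        rfl
    · rw [towerDecomp_append_fst_ne _ b ?_,
        towerDecomp_append_fst_ne a lu (by rw [hA]; simp)]
      · rfl
      · rw [towerDecomp_append_snd, hA]
        intro hcon
        have := congrArg List.length hcon
        simp at this
  · rw [towerDecomp_append_snd, towerDecomp_append_snd]

lemma pairRel_comp [LinearOrder (FreeMonoid Y)] [LinearOrder Z]
    (hY : ∀ u v w₁ w₂ : FreeMonoid Y, u < v → w₁ * u * w₂ < w₁ * v * w₂)
    (a0 b0 : FreeMonoid Y) (A B : List (Z × FreeMonoid Y))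
    (u0 v0 : FreeMonoid Y) (LU LV : List (Z × FreeMonoid Y))
    (h : LU.length < LV.length ∨ (LU.length = LV.length ∧
      (List.Lex towerPairLt LU.reverse LV.reverse ∨ (LU = LV ∧ u0 < v0)))) :
    (modLastTD b0 (modLastTD u0 A ++ LU) ++ B).length <
        (modLastTD b0 (modLastTD v0 A ++ LV) ++ B).length ∨
      ((modLastTD b0 (modLastTD u0 A ++ LU) ++ B).length =
          (modLastTD b0 (modLastTD v0 A ++ LV) ++ B).length ∧
        (List.Lex towerPairLt (modLastTD b0 (modLastTD u0 A ++ LU) ++ B).reverse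
            (modLastTD b0 (modLastTD v0 A ++ LV) ++ B).reverse ∨
          (modLastTD b0 (modLastTD u0 A ++ LU) ++ B =
              modLastTD b0 (modLastTD v0 A ++ LV) ++ B ∧
            compFst a0 A u0 b0 LU < compFst a0 A v0 b0 LV))) := by
  rcases h with hlt | ⟨hleq, hinner⟩
  · refine Or.inl ?_
    simp only [List.length_append, modLastTD_length]
    omega
  · refine Or.inr ⟨by simp only [List.length_append, modLastTD_length]; omega, ?_⟩
    rcases hinner with hlex | ⟨hLL, hfst⟩
    · -- Lex on the block lists of lu, lv
      have hLUne : LU ≠ [] := by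
        intro hnil
        subst hnil
        have hLVnil : LV = [] := List.length_eq_zero_iff.mp (by simpa using hleq.symm)
        subst hLVnil
        exact List.not_lex_nil hlex
      have hLVne : LV ≠ [] := by
        intro hnil
        subst hnil
        exact hLUne (List.length_eq_zero_iff.mp (by simpa using hleq))
      obtain ⟨⟨zu, uk⟩, TU, hru⟩ : ∃ p T, LU.reverse = p :: T := by
        rcases hx : LU.reverse with _ | ⟨p, T⟩
        · exact absurd (by simpa using congrArg List.reverse hx) hLUne
        · exact ⟨p, T, rfl⟩
      obtain ⟨⟨zv, vk⟩, TV, hrv⟩ : ∃ p T, LV.reverse = p :: T := by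
        rcases hx : LV.reverse with _ | ⟨p, T⟩
        · exact absurd (by simpa using congrArg List.reverse hx) hLVne
        · exact ⟨p, T, rfl⟩
      rw [hru, hrv] at hlex
      have key : List.Lex towerPairLt ((zu, uk * b0) :: TU) ((zv, vk * b0) :: TV) := by
        cases hlex with
        | cons h => exact List.Lex.cons h
        | rel hr =>
          rcases hr with h2 | ⟨h2, h1⟩
          · exact List.Lex.rel (Or.inl (by simpa using hY uk vk 1 b0 h2))
          · refine List.Lex.rel (Or.inr ⟨?_, h1⟩)
            show uk * b0 = vk * b0
            rw [show uk = vk from h2]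
      have hTlen : TU.length = TV.length := by
        have h1 := congrArg List.length hru
        have h2 := congrArg List.length hrv
        simp at h1 h2
        omega
      have key2 := lex_append_of_length_eq (modLastTD u0 A).reverse
        (modLastTD v0 A).reverse key (by simp [hTlen])
      refine Or.inl ?_
      rw [modLastTD_append b0 _ hLUne, modLastTD_append b0 _ hLVne]
      simp only [List.reverse_append]
      rw [modLastTD_of_reverse_cons b0 hru, modLastTD_of_reverse_cons b0 hrv]
      exact List.Lex.append_left _ key2 B.reverse
    · -- block lists equal, compare leading Y*-components
      subst hLL
      rcases hra : A.reverse with _ | ⟨⟨zA, am⟩, TA⟩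
      · have hA : A = [] := by simpa using congrArg List.reverse hra
        subst hA
        rcases LU with _ | ⟨pU, tU⟩
        · exact Or.inr ⟨rfl, hY u0 v0 a0 b0 hfst⟩
        · refine Or.inr ⟨rfl, ?_⟩
          show a0 * u0 < a0 * v0
          simpa using hY u0 v0 a0 1 hfst
      · have hPu := modLastTD_of_reverse_cons u0 hra
        have hPv := modLastTD_of_reverse_cons v0 hra
        rcases LU with _ | ⟨pU, tU⟩
        · refine Or.inl ?_
          rw [List.append_nil, List.append_nil]
          simp only [List.reverse_append]
          rw [modLastTD_of_reverse_cons b0 hPu, modLastTD_of_reverse_cons b0 hPv]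
          exact List.Lex.append_left towerPairLt
            (List.Lex.rel (Or.inl (hY u0 v0 am b0 hfst))) B.reverse
        · refine Or.inl ?_
          rw [modLastTD_append b0 (modLastTD u0 A) (List.cons_ne_nil pU tU),
            modLastTD_append b0 (modLastTD v0 A) (List.cons_ne_nil pU tU)]
          simp only [List.reverse_append]
          rw [hPu, hPv]
          exact List.Lex.append_left towerPairLt
            (List.Lex.append_left towerPairLt
              (List.Lex.rel (Or.inl (by simpa using hY u0 v0 am 1 hfst))) _) _

theorem towerLt_isMonomialOrder [LinearOrder (FreeMonoid Y)] [LinearOrder Z]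
    (hY : ∀ u v w₁ w₂ : FreeMonoid Y, u < v → w₁ * u * w₂ < w₁ * v * w₂) :
    IsStrictTotalOrder (FreeMonoid (Y ⊕ Z)) towerLt ∧
      ∀ u v w₁ w₂ : FreeMonoid (Y ⊕ Z), towerLt u v →
        towerLt (w₁ * u * w₂) (w₁ * v * w₂) := by
  have htrans : ∀ u v w : FreeMonoid (Y ⊕ Z), towerLt u v → towerLt v w → towerLt u w := by
    intro u v w huv hvw
    unfold towerLt at *
    rcases huv with h1 | ⟨e1, h1⟩ <;> rcases hvw with h2 | ⟨e2, h2⟩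
    · exact Or.inl (h1.trans h2)
    · exact Or.inl (by rw [← e2]; exact h1)
    · exact Or.inl (by rw [e1]; exact h2)
    · refine Or.inr ⟨e1.trans e2, ?_⟩
      rcases h1 with l1 | ⟨q1, f1⟩ <;> rcases h2 with l2 | ⟨q2, f2⟩
      · exact Or.inl (List.lex_trans (fun h1 h2 => trans_of towerPairLt h1 h2) l1 l2)
      · exact Or.inl (by rw [← q2]; exact l1)
      · exact Or.inl (by rw [q1]; exact l2)
      · exact Or.inr ⟨q1.trans q2, f1.trans f2⟩
  have hirr : ∀ u : FreeMonoid (Y ⊕ Z), ¬ towerLt u u := by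
    intro u h
    unfold towerLt at h
    rcases h with h | ⟨_, h | ⟨_, h⟩⟩
    · exact lt_irrefl _ h
    · exact irrefl_of (List.Lex towerPairLt) _ h
    · exact lt_irrefl _ h
  have htri : ∀ u v : FreeMonoid (Y ⊕ Z), towerLt u v ∨ u = v ∨ towerLt v u := by
    intro u v
    unfold towerLt
    rcases lt_trichotomy (towerDecomp u.toList).2.length (towerDecomp v.toList).2.length
      with h | h | h
    · exact Or.inl (Or.inl h)
    · rcases trichotomous_of (List.Lex towerPairLt) (towerDecomp u.toList).2.reverse
        (towerDecomp v.toList).2.reverse with hl | hl | hl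
      · exact Or.inl (Or.inr ⟨h, Or.inl hl⟩)
      · have hLL : (towerDecomp u.toList).2 = (towerDecomp v.toList).2 :=
          List.reverse_injective hl
        rcases lt_trichotomy (towerDecomp u.toList).1 (towerDecomp v.toList).1
          with hf | hf | hf
        · exact Or.inl (Or.inr ⟨h, Or.inr ⟨hLL, hf⟩⟩)
        · refine Or.inr (Or.inl ?_)
          exact FreeMonoid.toList.injective (towerDecomp_injective (Prod.ext hf hLL))
        · exact Or.inr (Or.inr (Or.inr ⟨h.symm, Or.inr ⟨hLL.symm, hf⟩⟩))
      · exact Or.inr (Or.inr (Or.inr ⟨h.symm, Or.inl hl⟩))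
    · exact Or.inr (Or.inr (Or.inl h))
  refine ⟨{ trichotomous := fun a b h1 h2 => ((htri a b).resolve_left h1).resolve_right h2, irrefl := hirr, trans := htrans }, ?_⟩
  intro u v w₁ w₂ h
  unfold towerLt at h ⊢
  have h1 : (w₁ * u * w₂).toList = (w₁.toList ++ u.toList) ++ w₂.toList := rfl
  have h2 : (w₁ * v * w₂).toList = (w₁.toList ++ v.toList) ++ w₂.toList := rfl
  rw [h1, h2, towerDecomp_comp, towerDecomp_comp]
  exact pairRel_comp hY _ _ _ _ _ _ _ _ h
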